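/- arXiv:2603.07276 — 3 statements merged into one kernel-verified Lean document; each statement's English description precedes it below -/
import Mathlib

section
/- Let $C$ be symmetric positive definite, $A \in \mathbb{R}^{m \times d}$, $\sigma, \tau > 0$, and let $K = C A^\top (ACA^\top + \sigma^2 I)^{-1}$ be the Kalman gain. Then $(C^{-1} + \sigma^{-2} A^\top A + \tau^{-2} I)^{-1}\,(\sigma^{-2} A^\top + \tau^{-2} K) = K$. -/
open Matrix

lemma posDef_smul_aux {n : ℕ} {M : Matrix (Fin n) (Fin n) ℝ} (hM : M.PosDef) {c : ℝ}
    (hc : 0 < c) : (c • M).PosDef := by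
  refine posDef_iff_dotProduct_mulVec.mpr ⟨?_, fun x hx => ?_⟩
  · unfold Matrix.IsHermitian
    rw [conjTranspose_smul, hM.1]; simp
  · have := hM.dotProduct_mulVec_pos hx
    simp only [smul_mulVec, dotProduct_smul, smul_eq_mul]
    positivity

lemma posSemidef_smul_aux {n : ℕ} {M : Matrix (Fin n) (Fin n) ℝ} (hM : M.PosSemidef) {c : ℝ}
    (hc : 0 ≤ c) : (c • M).PosSemidef := by
  refine posSemidef_iff_dotProduct_mulVec.mpr ⟨?_, fun x => ?_⟩
  · unfold Matrix.IsHermitian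
    rw [conjTranspose_smul, hM.1]; simp
  · have := hM.dotProduct_mulVec_nonneg x
    simp only [smul_mulVec, dotProduct_smul, smul_eq_mul]
    positivity

/-- With Kalman gain `K = C Aᵀ (A C Aᵀ + σ² I)⁻¹`, one has
`(C⁻¹ + σ⁻² AᵀA + τ⁻² I)⁻¹ (σ⁻² Aᵀ + τ⁻² K) = K`. -/
theorem stmt13 {d m : ℕ} (C : Matrix (Fin d) (Fin d) ℝ) (hC : C.PosDef)
    (A : Matrix (Fin m) (Fin d) ℝ) (σ τ : ℝ) (hσ : 0 < σ) (hτ : 0 < τ) :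
    (C⁻¹ + (σ ^ 2)⁻¹ • (Aᵀ * A) + (τ ^ 2)⁻¹ • (1 : Matrix (Fin d) (Fin d) ℝ))⁻¹ *
        ((σ ^ 2)⁻¹ • Aᵀ +
          (τ ^ 2)⁻¹ •
            (C * Aᵀ * (A * C * Aᵀ + σ ^ 2 • (1 : Matrix (Fin m) (Fin m) ℝ))⁻¹)) =
      C * Aᵀ * (A * C * Aᵀ + σ ^ 2 • (1 : Matrix (Fin m) (Fin m) ℝ))⁻¹ := by
  have hσ2 : (0:ℝ) < σ ^ 2 := by positivity
  have hτ2 : (0:ℝ) < τ ^ 2 := by positivity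
  set S : Matrix (Fin m) (Fin m) ℝ := A * C * Aᵀ + σ ^ 2 • (1 : Matrix (Fin m) (Fin m) ℝ)
    with hS
  set K : Matrix (Fin d) (Fin m) ℝ := C * Aᵀ * S⁻¹ with hK
  -- S is posdef, hence invertible
  have hACA : (A * C * Aᵀ).PosSemidef := by
    have := hC.posSemidef.mul_mul_conjTranspose_same A
    simpa using this
  have hSpd : S.PosDef := Matrix.PosDef.posSemidef_add hACA (posDef_smul_aux Matrix.PosDef.one hσ2)
  have hSinv : S * S⁻¹ = 1 :=
    mul_nonsing_inv _ ((Matrix.isUnit_iff_isUnit_det S).mp hSpd.isUnit)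
  -- M' = C⁻¹ + σ⁻² AᵀA + τ⁻² I is posdef
  set M' : Matrix (Fin d) (Fin d) ℝ :=
    C⁻¹ + (σ ^ 2)⁻¹ • (Aᵀ * A) + (τ ^ 2)⁻¹ • (1 : Matrix (Fin d) (Fin d) ℝ) with hM'
  have hAA : (Aᵀ * A).PosSemidef := by
    have := posSemidef_conjTranspose_mul_self A
    simpa using this
  have hM'pd : M'.PosDef := by
    refine Matrix.PosDef.add ?_ (posDef_smul_aux Matrix.PosDef.one (by positivity))
    exact hC.inv.add_posSemidef (posSemidef_smul_aux hAA (by positivity))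
  have hM'inv : M'⁻¹ * M' = 1 :=
    nonsing_inv_mul _ ((Matrix.isUnit_iff_isUnit_det M').mp hM'pd.isUnit)
  have hCinv : C⁻¹ * C = 1 :=
    nonsing_inv_mul _ ((Matrix.isUnit_iff_isUnit_det C).mp hC.isUnit)
  -- Key identity: (C⁻¹ + σ⁻² AᵀA) * K = σ⁻² Aᵀ
  have key : (C⁻¹ + (σ ^ 2)⁻¹ • (Aᵀ * A)) * K = (σ ^ 2)⁻¹ • Aᵀ := by
    have h1 : (C⁻¹ + (σ ^ 2)⁻¹ • (Aᵀ * A)) * (C * Aᵀ) = (σ ^ 2)⁻¹ • (Aᵀ * S) := by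
      rw [hS, Matrix.add_mul, Matrix.smul_mul,
        ← Matrix.mul_assoc C⁻¹ C Aᵀ, hCinv, Matrix.one_mul,
        Matrix.mul_add, Matrix.mul_smul, Matrix.mul_one, smul_add, smul_smul,
        inv_mul_cancel₀ (ne_of_gt hσ2), one_smul, add_comm]
      congr 1
      simp [Matrix.mul_assoc]
    rw [hK, ← Matrix.mul_assoc, h1, Matrix.smul_mul, Matrix.mul_assoc, hSinv, Matrix.mul_one]
  have key2 : M' * K = (σ ^ 2)⁻¹ • Aᵀ + (τ ^ 2)⁻¹ • K := by
    rw [hM', Matrix.add_mul, key, Matrix.smul_mul, Matrix.one_mul]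
  calc M'⁻¹ * ((σ ^ 2)⁻¹ • Aᵀ + (τ ^ 2)⁻¹ • K) = M'⁻¹ * (M' * K) := by rw [key2]
    _ = (M'⁻¹ * M') * K := by rw [Matrix.mul_assoc]
    _ = K := by rw [hM'inv, Matrix.one_mul]
end

section
/- Let $K_\theta \in \mathbb{R}^{d \times d}$ be invertible with $K_\theta K_\theta^\top = C$, let $\Sigma_\phi = (I + \tau^{-2} K_\theta^\top K_\theta + \sigma^{-2} K_\theta^\top A^\top A K_\theta)^{-1}$, and let $K_\phi = \Sigma_\phi K_\theta^\top (\sigma^{-2} A^\top + \tau^{-2} K)$ with $K = CA^\top(ACA^\top + \sigma^2 I)^{-1}$. Then $K_\theta K_\phi = K$. -/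
open Matrix

lemma stmt14_smul_posDef {n : ℕ} {c : ℝ} (hc : 0 < c) {M : Matrix (Fin n) (Fin n) ℝ}
    (hM : M.PosDef) : (c • M).PosDef := by
  refine ⟨?_, fun x hx => ?_⟩
  · unfold Matrix.IsHermitian
    rw [conjTranspose_smul, hM.1.eq]
    simp
  · simpa [Finsupp.mul_sum, mul_assoc, mul_left_comm] using mul_pos hc (hM.2 hx)

lemma stmt14_smul_posSemidef {n : ℕ} {c : ℝ} (hc : 0 ≤ c) {M : Matrix (Fin n) (Fin n) ℝ}
    (hM : M.PosSemidef) : (c • M).PosSemidef := by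
  refine ⟨?_, fun x => ?_⟩
  · unfold Matrix.IsHermitian
    rw [conjTranspose_smul, hM.1.eq]
    simp
  · simpa [Finsupp.mul_sum, mul_assoc, mul_left_comm] using mul_nonneg hc (hM.2 x)

/-- At the joint optimum of the VFM objective in the linear-Gaussian setting,
the product of the generative weight `K_θ` and the optimal variational gain
`K_φ = Σ_φ K_θᵀ (σ⁻² Aᵀ + τ⁻² K)` equals the Kalman gain `K`. -/
theorem stmt14 {d m : ℕ} (C : Matrix (Fin d) (Fin d) ℝ) (hC : C.PosDef)
    (A : Matrix (Fin m) (Fin d) ℝ) (σ τ : ℝ) (hσ : 0 < σ) (hτ : 0 < τ)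
    (Kθ : Matrix (Fin d) (Fin d) ℝ) (hKθ : IsUnit Kθ.det)
    (hKθC : Kθ * Kθᵀ = C)
    (K : Matrix (Fin d) (Fin m) ℝ)
    (hK : K = C * Aᵀ * (A * C * Aᵀ + σ ^ 2 • (1 : Matrix (Fin m) (Fin m) ℝ))⁻¹)
    (Sφ : Matrix (Fin d) (Fin d) ℝ)
    (hSφ : Sφ = (1 + (τ ^ 2)⁻¹ • (Kθᵀ * Kθ) + (σ ^ 2)⁻¹ • (Kθᵀ * Aᵀ * A * Kθ))⁻¹)
    (Kφ : Matrix (Fin d) (Fin m) ℝ)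
    (hKφ : Kφ = Sφ * Kθᵀ * ((σ ^ 2)⁻¹ • Aᵀ + (τ ^ 2)⁻¹ • K)) :
    Kθ * Kφ = K := by
  have hσ2 : (0:ℝ) < σ ^ 2 := by positivity
  have hτ2 : (0:ℝ) < τ ^ 2 := by positivity
  have hKθT : IsUnit Kθᵀ.det := by rwa [Matrix.det_transpose]
  have hCunit : IsUnit C.det := hC.det_pos.ne'.isUnit
  set B : Matrix (Fin m) (Fin m) ℝ := A * C * Aᵀ + σ ^ 2 • (1 : Matrix (Fin m) (Fin m) ℝ)
    with hBdef
  have hACA : (A * C * Aᵀ).PosSemidef := by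
    have := hC.posSemidef.mul_mul_conjTranspose_same A
    rwa [conjTranspose_eq_transpose_of_trivial] at this
  have hBpd : B.PosDef :=
    Matrix.PosDef.posSemidef_add hACA (stmt14_smul_posDef hσ2 Matrix.PosDef.one)
  have hBunit : IsUnit B.det := hBpd.det_pos.ne'.isUnit
  have hBB : B * B⁻¹ = 1 := Matrix.mul_nonsing_inv B hBunit
  set P : Matrix (Fin d) (Fin d) ℝ :=
    C⁻¹ + (τ ^ 2)⁻¹ • (1 : Matrix (Fin d) (Fin d) ℝ) + (σ ^ 2)⁻¹ • (Aᵀ * A) with hPdef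
  have hAtA : (Aᵀ * A).PosSemidef := by
    have := Matrix.posSemidef_conjTranspose_mul_self A
    rwa [conjTranspose_eq_transpose_of_trivial] at this
  have hPpd : P.PosDef :=
    (hC.inv.add (stmt14_smul_posDef (inv_pos.mpr hτ2) Matrix.PosDef.one)).add_posSemidef
      (stmt14_smul_posSemidef (inv_nonneg.mpr hσ2.le) hAtA)
  have hPunit : IsUnit P.det := hPpd.det_pos.ne'.isUnit
  have hCinv : C⁻¹ = Kθᵀ⁻¹ * Kθ⁻¹ := by
    rw [← hKθC, Matrix.mul_inv_rev]
  have hmid : Kθᵀ * C⁻¹ * Kθ = 1 := by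
    rw [hCinv, ← mul_assoc, Matrix.mul_nonsing_inv _ hKθT, one_mul,
      Matrix.nonsing_inv_mul _ hKθ]
  have hmid' : Kθᵀ * (C⁻¹ * Kθ) = 1 := by rw [← Matrix.mul_assoc]; exact hmid
  have hM : (1 : Matrix (Fin d) (Fin d) ℝ) + (τ ^ 2)⁻¹ • (Kθᵀ * Kθ)
      + (σ ^ 2)⁻¹ • (Kθᵀ * Aᵀ * A * Kθ) = Kθᵀ * P * Kθ := by
    simp only [hPdef, Matrix.mul_add, Matrix.add_mul, Matrix.mul_smul, Matrix.smul_mul,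
      Matrix.mul_one, Matrix.one_mul, Matrix.mul_assoc, hmid']
  have hSφ' : Sφ = Kθ⁻¹ * P⁻¹ * Kθᵀ⁻¹ := by
    rw [hSφ, hM, Matrix.mul_inv_rev, Matrix.mul_inv_rev, ← mul_assoc]
  -- key identity: P * K = σ⁻² Aᵀ + τ⁻² K
  have h0 : Aᵀ * B = Aᵀ * (A * C * Aᵀ) + σ ^ 2 • Aᵀ := by
    rw [hBdef, Matrix.mul_add, Matrix.mul_smul, Matrix.mul_one]
  have hexp : Aᵀ * (A * C * Aᵀ) * B⁻¹ + σ ^ 2 • (Aᵀ * B⁻¹) = Aᵀ := by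
    calc Aᵀ * (A * C * Aᵀ) * B⁻¹ + σ ^ 2 • (Aᵀ * B⁻¹)
        = (Aᵀ * (A * C * Aᵀ) + σ ^ 2 • Aᵀ) * B⁻¹ := by
          rw [Matrix.add_mul, Matrix.smul_mul, Matrix.mul_assoc]
      _ = Aᵀ * B * B⁻¹ := by rw [h0]
      _ = Aᵀ := by rw [Matrix.mul_assoc, hBB, Matrix.mul_one]
  have hfrac : (σ ^ 2)⁻¹ • Aᵀ
      = (σ ^ 2)⁻¹ • (Aᵀ * (A * C * Aᵀ) * B⁻¹) + Aᵀ * B⁻¹ := by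
    conv_lhs => rw [← hexp]
    rw [smul_add, smul_smul, inv_mul_cancel₀ hσ2.ne', one_smul]
  have h1 : C⁻¹ * (C * Aᵀ * B⁻¹) = Aᵀ * B⁻¹ := by
    rw [← Matrix.mul_assoc, ← Matrix.mul_assoc, Matrix.nonsing_inv_mul _ hCunit,
      Matrix.one_mul]
  have h2 : ((σ ^ 2)⁻¹ • (Aᵀ * A)) * (C * Aᵀ * B⁻¹)
      = (σ ^ 2)⁻¹ • (Aᵀ * (A * C * Aᵀ) * B⁻¹) := by
    rw [Matrix.smul_mul]
    congr 1
    simp only [Matrix.mul_assoc]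
  have hkey : P * K = (σ ^ 2)⁻¹ • Aᵀ + (τ ^ 2)⁻¹ • K := by
    have hPK : P * K
        = Aᵀ * B⁻¹ + (τ ^ 2)⁻¹ • K + (σ ^ 2)⁻¹ • (Aᵀ * (A * C * Aᵀ) * B⁻¹) := by
      rw [hPdef, Matrix.add_mul, Matrix.add_mul, Matrix.smul_mul, Matrix.one_mul]
      rw [hK, h1, h2]
    rw [hPK, hfrac, hK]
    abel
  rw [hKφ, hSφ', ← hkey]
  have e1 : Kθᵀ⁻¹ * (Kθᵀ * (P * K)) = P * K := by
    rw [← Matrix.mul_assoc, Matrix.nonsing_inv_mul _ hKθT, Matrix.one_mul]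
  have e2 : P⁻¹ * (P * K) = K := by
    rw [← Matrix.mul_assoc, Matrix.nonsing_inv_mul _ hPunit, Matrix.one_mul]
  have e3 : Kθ * (Kθ⁻¹ * K) = K := by
    rw [← Matrix.mul_assoc, Matrix.mul_nonsing_inv _ hKθ, Matrix.one_mul]
  calc Kθ * (Kθ⁻¹ * P⁻¹ * Kθᵀ⁻¹ * Kθᵀ * (P * K))
      = Kθ * (Kθ⁻¹ * (P⁻¹ * (Kθᵀ⁻¹ * (Kθᵀ * (P * K))))) := by
        simp only [Matrix.mul_assoc]
    _ = K := by rw [e1, e2, e3]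
end

section
/- With notation as in the linear-Gaussian setting ($b_\theta = m$, $K_\theta K_\theta^\top = C$, $\Sigma_\phi$, $K_\phi$ as above, and $b_\phi = \Sigma_\phi K_\theta^\top[-\sigma^{-2} A^\top A m + \tau^{-2}(I - KA)m - \tau^{-2} m]$), the expected one-step reconstruction satisfies $K_\theta(K_\phi y + b_\phi) + b_\theta = m + K(y - Am)$ for every $y \in \mathbb{R}^m$, i.e., it equals the exact Bayesian posterior mean $\mathbb{E}[x \mid y]$. -/
open Matrix

lemma auxPSD_smul {n : Type*} [Fintype n] {M : Matrix n n ℝ} (h : M.PosSemidef)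
    {c : ℝ} (hc : 0 ≤ c) : (c • M).PosSemidef := by
  have hherm : (c • M).IsHermitian := by
    have : (c • M)ᴴ = c • M := by
      rw [conjTranspose_smul, h.1.eq, star_trivial]
    exact this
  refine ⟨hherm, fun x => ?_⟩
  refine le_of_le_of_eq (mul_nonneg hc (h.2 x)) ?_
  simp only [Finsupp.mul_sum, Matrix.smul_apply, smul_eq_mul, star_trivial]
  exact Finsupp.sum_congr fun i _ => Finsupp.sum_congr fun j _ => by ring

lemma auxPD_smul_one {n : Type*} [Fintype n] [DecidableEq n]
    {c : ℝ} (hc : 0 < c) : (c • (1 : Matrix n n ℝ)).PosDef := by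
  rw [smul_one_eq_diagonal]
  exact posDef_diagonal_iff.mpr fun i => hc

lemma auxPSD_tAt {k n : Type*} [Fintype k] [Fintype n] (A : Matrix k n ℝ) :
    (Aᵀ * A).PosSemidef := by
  have := posSemidef_conjTranspose_mul_self A
  simpa using this

set_option maxHeartbeats 1000000 in
/-- Posterior mean recovery (Lemma A.6): with `b_θ = m`, `K_θ K_θᵀ = C`, optimal
`Σ_φ`, `K_φ` and `b_φ`, the expected one-step reconstruction
`K_θ (K_φ y + b_φ) + b_θ` equals the exact Bayesian posterior mean
`m + K (y - A m)` for every `y`. -/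
theorem stmt15 {d m' : ℕ} (C : Matrix (Fin d) (Fin d) ℝ) (hC : C.PosDef)
    (A : Matrix (Fin m') (Fin d) ℝ) (σ τ : ℝ) (hσ : 0 < σ) (hτ : 0 < τ)
    (m : Fin d → ℝ)
    (Kθ : Matrix (Fin d) (Fin d) ℝ) (hKθ : IsUnit Kθ.det)
    (hKθC : Kθ * Kθᵀ = C)
    (K : Matrix (Fin d) (Fin m') ℝ)
    (hK : K = C * Aᵀ * (A * C * Aᵀ + σ ^ 2 • (1 : Matrix (Fin m') (Fin m') ℝ))⁻¹)
    (Sφ : Matrix (Fin d) (Fin d) ℝ)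
    (hSφ : Sφ = (1 + (τ ^ 2)⁻¹ • (Kθᵀ * Kθ) + (σ ^ 2)⁻¹ • (Kθᵀ * Aᵀ * A * Kθ))⁻¹)
    (Kφ : Matrix (Fin d) (Fin m') ℝ)
    (hKφ : Kφ = Sφ * Kθᵀ * ((σ ^ 2)⁻¹ • Aᵀ + (τ ^ 2)⁻¹ • K))
    (bφ : Fin d → ℝ)
    (hbφ : bφ = (Sφ * Kθᵀ).mulVec
      (-(σ ^ 2)⁻¹ • (Aᵀ * A).mulVec m + (τ ^ 2)⁻¹ • ((1 - K * A).mulVec m)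
        - (τ ^ 2)⁻¹ • m)) :
    ∀ y : Fin m' → ℝ,
      Kθ.mulVec (Kφ.mulVec y + bφ) + m = m + K.mulVec (y - A.mulVec m) := by
  have hσ2 : (0:ℝ) < σ ^ 2 := by positivity
  have hτ2 : (0:ℝ) < τ ^ 2 := by positivity
  set S : Matrix (Fin m') (Fin m') ℝ := A * C * Aᵀ + σ ^ 2 • 1 with hSdef
  set M : Matrix (Fin d) (Fin d) ℝ :=
    1 + (τ ^ 2)⁻¹ • (Kθᵀ * Kθ) + (σ ^ 2)⁻¹ • (Kθᵀ * Aᵀ * A * Kθ) with hMdef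
  -- invertibility of S
  have hSpd : S.PosDef := by
    refine Matrix.PosDef.posSemidef_add ?_ (auxPD_smul_one hσ2)
    have := hC.posSemidef.mul_mul_conjTranspose_same A
    simpa using this
  have hSdet : IsUnit S.det := isUnit_iff_ne_zero.mpr hSpd.det_pos.ne'
  -- invertibility of M
  have hMpd : M.PosDef := by
    refine Matrix.PosDef.add_posSemidef (Matrix.PosDef.add_posSemidef Matrix.PosDef.one ?_) ?_
    · exact auxPSD_smul (auxPSD_tAt Kθ) (by positivity)
    · have : Kθᵀ * Aᵀ * A * Kθ = (A * Kθ)ᵀ * (A * Kθ) := by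
        simp [Matrix.transpose_mul, Matrix.mul_assoc]
      rw [this]
      exact auxPSD_smul (auxPSD_tAt (A * Kθ)) (by positivity)
  have hMdet : IsUnit M.det := isUnit_iff_ne_zero.mpr hMpd.det_pos.ne'
  have hKθKθ : Kθ * Kθ⁻¹ = 1 := mul_nonsing_inv _ hKθ
  have hKθKθ' : Kθ⁻¹ * Kθ = 1 := nonsing_inv_mul _ hKθ
  -- core identity
  have core : σ ^ 2 • K + C * Aᵀ * A * K = C * Aᵀ := by
    have h1 : σ ^ 2 • K + C * Aᵀ * A * K = C * Aᵀ * ((σ ^ 2 • 1 + A * C * Aᵀ) * S⁻¹) := by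
      rw [hK]
      simp only [Matrix.mul_add, Matrix.add_mul, Matrix.mul_smul, Matrix.smul_mul,
        Matrix.mul_one, Matrix.one_mul, Matrix.mul_assoc]
    rw [h1, add_comm (σ ^ 2 • (1 : Matrix (Fin m') (Fin m') ℝ)), ← hSdef,
      mul_nonsing_inv _ hSdet, Matrix.mul_one]
  -- scaled core
  have core' : (σ ^ 2)⁻¹ • (C * Aᵀ) = K + (σ ^ 2)⁻¹ • (C * Aᵀ * A * K) := by
    conv_lhs => rw [← core]
    rw [smul_add, smul_smul, inv_mul_cancel₀ hσ2.ne', one_smul]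
  -- key : Kθᵀ * ((σ²)⁻¹•Aᵀ + (τ²)⁻¹•K) = M * (Kθ⁻¹ * K)
  have key : Kθᵀ * ((σ ^ 2)⁻¹ • Aᵀ + (τ ^ 2)⁻¹ • K) = M * (Kθ⁻¹ * K) := by
    have hcancel : ∀ X Y : Matrix (Fin d) (Fin m') ℝ, Kθ * X = Kθ * Y → X = Y := by
      intro X Y h
      have := congrArg (fun Z => Kθ⁻¹ * Z) h
      simpa [← Matrix.mul_assoc, hKθKθ'] using this
    apply hcancel
    have lhs : Kθ * (Kθᵀ * ((σ ^ 2)⁻¹ • Aᵀ + (τ ^ 2)⁻¹ • K))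
        = (σ ^ 2)⁻¹ • (C * Aᵀ) + (τ ^ 2)⁻¹ • (C * K) := by
      rw [← Matrix.mul_assoc, hKθC]
      simp only [Matrix.mul_add, Matrix.mul_smul]
    have rhs : Kθ * (M * (Kθ⁻¹ * K))
        = K + (τ ^ 2)⁻¹ • (C * K) + (σ ^ 2)⁻¹ • (C * Aᵀ * A * K) := by
      rw [hMdef]
      simp only [Matrix.add_mul, Matrix.mul_add, Matrix.one_mul, Matrix.mul_smul,
        Matrix.smul_mul]
      rw [Matrix.mul_nonsing_inv_cancel_left _ _ hKθ]
      congr 2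
      · have : Kθᵀ * Kθ * (Kθ⁻¹ * K) = Kθᵀ * (Kθ * (Kθ⁻¹ * K)) := by
          simp [Matrix.mul_assoc]
        rw [this, Matrix.mul_nonsing_inv_cancel_left _ _ hKθ,
          ← Matrix.mul_assoc, hKθC]
      · have : Kθᵀ * Aᵀ * A * Kθ * (Kθ⁻¹ * K) = Kθᵀ * Aᵀ * A * (Kθ * (Kθ⁻¹ * K)) := by
          simp [Matrix.mul_assoc]
        rw [this, Matrix.mul_nonsing_inv_cancel_left _ _ hKθ]
        have : Kθ * (Kθᵀ * Aᵀ * A * K) = C * Aᵀ * A * K := by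
          simp only [← Matrix.mul_assoc, hKθC]
        exact this
    rw [lhs, rhs, core']
    abel
  have hKφ' : Kφ = Kθ⁻¹ * K := by
    rw [hKφ, hSφ, Matrix.mul_assoc, key,
      Matrix.nonsing_inv_mul_cancel_left _ _ hMdet]
  have hKθKφ : Kθ * Kφ = K := by
    rw [hKφ', Matrix.mul_nonsing_inv_cancel_left _ _ hKθ]
  -- bφ computation
  have hbvec : Kθ.mulVec bφ = -((K * A).mulVec m) := by
    have hv : (-(σ ^ 2)⁻¹ • (Aᵀ * A).mulVec m + (τ ^ 2)⁻¹ • ((1 - K * A).mulVec m)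
        - (τ ^ 2)⁻¹ • m)
        = (-(((σ ^ 2)⁻¹ • Aᵀ + (τ ^ 2)⁻¹ • K) * A)).mulVec m := by
      simp only [Matrix.sub_mulVec, Matrix.add_mulVec, Matrix.one_mulVec,
        Matrix.neg_mulVec, Matrix.smul_mulVec, Matrix.add_mul, Matrix.smul_mul,
        smul_sub]
      module
    rw [hbφ, hv, Matrix.mulVec_mulVec, Matrix.mulVec_mulVec]
    have : Kθ * (Sφ * Kθᵀ) * -(((σ ^ 2)⁻¹ • Aᵀ + (τ ^ 2)⁻¹ • K) * A) = -(K * A) := by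
      have h2 : Kθ * (Sφ * Kθᵀ) * -(((σ ^ 2)⁻¹ • Aᵀ + (τ ^ 2)⁻¹ • K) * A)
          = -((Kθ * Kφ) * A) := by
        rw [hKφ]
        simp only [Matrix.mul_neg, Matrix.mul_assoc]
      rw [h2, hKθKφ]
    rw [this, Matrix.neg_mulVec]
  intro y
  have h1 : Kθ.mulVec (Kφ.mulVec y + bφ)
      = K.mulVec y + Kθ.mulVec bφ := by
    rw [Matrix.mulVec_add, Matrix.mulVec_mulVec, hKθKφ]
  rw [h1, hbvec]
  have h2 : K.mulVec (y - A.mulVec m) = K.mulVec y - (K * A).mulVec m := by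
    rw [Matrix.mulVec_sub, Matrix.mulVec_mulVec]
  rw [h2]
  abel
end
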